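/- Let k ≥ 5, f_0 as above, f_r = D^r·f_0 with D = ((k+2)y² − 2kz)∂/∂y + (3k+4)yz ∂/∂z. Then f_2 = p(y,z)·f_0 + q(y)·f_1, where p(y,z) = −(k+1)(k+2)²((k+1)y² + kz) and q(y) = (k+2)(2k+3)y. Consequently, f_r ∈ ℂ[y,z]f_0 + ℂ[y,z]f_1 for all r ≥ 0. -/

import Mathlib

open MvPolynomial

/-- The operator `D = ((k+2)y² − 2kz) ∂/∂y + (3k+4) yz ∂/∂z` on `ℂ[y,z]`. -/
noncomputable def D2 (k : ℂ) : MvPolynomial (Fin 2) ℂ → MvPolynomial (Fin 2) ℂ :=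
  fun p => (C (k + 2) * X 0 ^ 2 - C (2 * k) * X 1) * pderiv 0 p
    + C (3 * k + 4) * X 0 * X 1 * pderiv 1 p

/-- `f₀(y,z) = Σⱼ (−1)ʲ (k+1)!/((k+1−2j)!(j!)²) y^{k+1−2j} zʲ`. -/
noncomputable def f0 (k : ℕ) : MvPolynomial (Fin 2) ℂ :=
  ∑ j ∈ Finset.range ((k + 1) / 2 + 1),
    C ((-1) ^ j * (Nat.factorial (k + 1) : ℂ) /
      (Nat.factorial (k + 1 - 2 * j) * (Nat.factorial j) ^ 2)) *
    X 0 ^ (k + 1 - 2 * j) * X 1 ^ j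


open Finset
noncomputable section Aux

def SS (w R : ℕ) (c : ℕ → ℂ) : MvPolynomial (Fin 2) ℂ :=
  ∑ j ∈ Finset.range R, C (c j) * X 0 ^ (w - 2*j) * X 1 ^ j

def nxt (K : ℂ) (w : ℕ) (c : ℕ → ℂ) : ℕ → ℂ := fun j =>
  (if j = 0 then 0 else (-(2*K)) * ((w - 2*(j-1) : ℕ) : ℂ) * c (j-1))
  + c j * (((w - 2*j : ℕ) : ℂ) * (K+2) + (j : ℂ) * (3*K+4))

lemma D2_add (K : ℂ) (p q : MvPolynomial (Fin 2) ℂ) : D2 K (p + q) = D2 K p + D2 K q := by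
  simp only [D2, map_add, mul_add]; ring

lemma D2_sum (K : ℂ) {α : Type*} (s : Finset α) (f : α → MvPolynomial (Fin 2) ℂ) :
    D2 K (∑ a ∈ s, f a) = ∑ a ∈ s, D2 K (f a) := by
  simp [D2, Finset.mul_sum, Finset.sum_add_distrib]

lemma D2_monomial (K : ℂ) (a : ℂ) (u v : ℕ) :
    D2 K (C a * X 0 ^ u * X 1 ^ v) =
      C (a * ((u : ℂ) * (K+2) + (v : ℂ) * (3*K+4))) * X 0 ^ (u+1) * X 1 ^ v
      + C (a * (-(2*K)) * (u : ℂ)) * X 0 ^ (u-1) * X 1 ^ (v+1) := by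
  simp only [D2, pderiv_mul, pderiv_C_mul, pderiv_pow, pderiv_X_self,
    pderiv_X_of_ne (show (1:Fin 2) ≠ 0 by decide), pderiv_X_of_ne (show (0:Fin 2) ≠ 1 by decide)]
  rcases Nat.eq_zero_or_pos u with hu | hu
  · rcases Nat.eq_zero_or_pos v with hv | hv
    · subst hu; subst hv; simp [map_ofNat] <;> ring
    · subst hu
      obtain ⟨v', rfl⟩ := Nat.exists_eq_succ_of_ne_zero hv.ne'
      simp [map_ofNat, pow_succ] <;> ring
  · obtain ⟨u', rfl⟩ := Nat.exists_eq_succ_of_ne_zero hu.ne'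
    rcases Nat.eq_zero_or_pos v with hv | hv
    · subst hv; simp [map_ofNat, pow_succ] <;> ring
    · obtain ⟨v', rfl⟩ := Nat.exists_eq_succ_of_ne_zero hv.ne'
      simp [map_ofNat, pow_succ] <;> ring

lemma D2_S (K : ℂ) (w R : ℕ) (c : ℕ → ℂ) (hsupp : ∀ j, w < 2*j → c j = 0)
    (htop : ∀ j, R ≤ j → c j = 0) :
    D2 K (SS w R c) = SS (w+1) (R+1) (nxt K w c) := by
  rw [SS, D2_sum]
  have hL : ∀ j, D2 K (C (c j) * X 0 ^ (w-2*j) * X 1 ^ j)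
      = C (c j * (((w-2*j : ℕ) : ℂ) * (K+2) + (j : ℂ) * (3*K+4))) * X 0 ^ ((w-2*j)+1) * X 1 ^ j
      + C (c j * (-(2*K)) * ((w-2*j : ℕ) : ℂ)) * X 0 ^ ((w-2*j)-1) * X 1 ^ (j+1) :=
    fun j => D2_monomial K (c j) (w-2*j) j
  simp only [hL]
  rw [Finset.sum_add_distrib]
  have hR : SS (w+1) (R+1) (nxt K w c)
      = ∑ j ∈ range (R+1), C (c j * (((w - 2*j : ℕ) : ℂ) * (K+2) + (j : ℂ) * (3*K+4))) * X 0 ^ (w+1-2*j) * X 1 ^ j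
      + ∑ j ∈ range (R+1), C ((if j = 0 then 0 else (-(2*K)) * ((w - 2*(j-1) : ℕ) : ℂ) * c (j-1))) * X 0 ^ (w+1-2*j) * X 1 ^ j := by
    rw [SS, ← Finset.sum_add_distrib]
    refine Finset.sum_congr rfl fun j _ => ?_
    rw [nxt, map_add, add_mul, add_mul, add_comm]
  rw [hR]
  refine congrArg₂ (· + ·) ?_ ?_
  · -- α part
    rw [Finset.sum_range_succ]
    rw [htop R le_rfl]
    simp only [zero_mul, map_zero, add_zero]
    refine (Finset.sum_congr rfl fun j hj => ?_).symm
    rcases le_or_gt (2*j) w with h | h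
    · have he : w - 2*j + 1 = w + 1 - 2*j := by omega
      rw [he]
    · rw [hsupp j h]
      simp
  · -- β part
    rw [Finset.sum_range_succ']
    simp only [Nat.succ_ne_zero, if_false, if_true, ite_true, ite_false, reduceIte,
      Nat.add_sub_cancel, map_zero, zero_mul, add_zero]
    refine (Finset.sum_congr rfl fun j hj => ?_).symm
    have he : w + 1 - 2*(j+1) = (w - 2*j) - 1 := by omega
    rw [he]
    ring_nf

lemma SS_congr (w R : ℕ) (c c' : ℕ → ℂ) (h : ∀ j, c j = c' j) : SS w R c = SS w R c' := by
  unfold SS; exact Finset.sum_congr rfl fun j _ => by rw [h j]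

lemma SS_extend (w : ℕ) {R R' : ℕ} (c : ℕ → ℂ) (hR : R ≤ R') (h : ∀ j, R ≤ j → c j = 0) :
    SS w R c = SS w R' c := by
  unfold SS
  refine Finset.sum_subset (Finset.range_subset_range.2 hR) fun j _ hj => ?_
  rw [h j (by simpa using hj)]; simp

lemma SS_add (w R : ℕ) (c c' : ℕ → ℂ) : SS w R c + SS w R c' = SS w R (fun j => c j + c' j) := by
  unfold SS
  rw [← Finset.sum_add_distrib]
  exact Finset.sum_congr rfl fun j _ => by rw [map_add, add_mul, add_mul]

lemma C_mul_X0sq_SS (a : ℂ) (w R : ℕ) (c : ℕ → ℂ) (hsupp : ∀ j, w < 2*j → c j = 0) :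
    C a * X 0 ^ 2 * SS w R c = SS (w+2) R (fun j => a * c j) := by
  unfold SS
  rw [Finset.mul_sum]
  refine Finset.sum_congr rfl fun j _ => ?_
  rcases le_or_gt (2*j) w with h | h
  · have he : w + 2 - 2*j = (w - 2*j) + 2 := by omega
    rw [he, pow_add, map_mul]; ring
  · simp [hsupp j h]

lemma C_mul_X0_SS (a : ℂ) (w R : ℕ) (c : ℕ → ℂ) (hsupp : ∀ j, w < 2*j → c j = 0) :
    C a * X 0 * SS w R c = SS (w+1) R (fun j => a * c j) := by
  unfold SS
  rw [Finset.mul_sum]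
  refine Finset.sum_congr rfl fun j _ => ?_
  rcases le_or_gt (2*j) w with h | h
  · have he : w + 1 - 2*j = (w - 2*j) + 1 := by omega
    rw [he, pow_add, map_mul]; ring
  · simp [hsupp j h]

lemma C_mul_X1_SS (a : ℂ) (w R : ℕ) (c : ℕ → ℂ) :
    C a * X 1 * SS w R c = SS (w+2) (R+1) (fun j => if j = 0 then 0 else a * c (j-1)) := by
  unfold SS
  rw [Finset.mul_sum, Finset.sum_range_succ']
  simp only [Nat.succ_ne_zero, ite_false, ite_true, reduceIte, Nat.add_sub_cancel,
    map_zero, zero_mul, add_zero]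
  refine Finset.sum_congr rfl fun j _ => ?_
  have he : w + 2 - 2*(j+1) = w - 2*j := by omega
  rw [he, map_mul, pow_succ]
  ring


def cf (n : ℕ) : ℕ → ℂ := fun j =>
  if 2*j ≤ n then
    (-1)^j * (Nat.factorial n : ℂ) / ((Nat.factorial (n - 2*j) : ℂ) * (Nat.factorial j : ℂ)^2)
  else 0

lemma cf_supp (n : ℕ) : ∀ j, n < 2*j → cf n j = 0 := fun j h => by
  rw [cf, if_neg (by omega)]

lemma cf_top (n : ℕ) : ∀ j, n/2 + 1 ≤ j → cf n j = 0 := fun j h => by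
  rw [cf, if_neg (by omega)]

lemma cf_rec (n j : ℕ) (hj : 1 ≤ j) (hle : 2*j ≤ n+2) :
    (j:ℂ)^2 * cf n j = -(((n:ℂ) - 2*(j:ℂ) + 1) * ((n:ℂ) - 2*(j:ℂ) + 2)) * cf n (j-1) := by
  obtain ⟨i, rfl⟩ := Nat.exists_eq_add_of_le hj
  simp only [Nat.add_sub_cancel_left, Nat.add_sub_cancel]
  rcases lt_or_ge n (2*(1+i)) with h | h
  · have h0 : cf n (1+i) = 0 := cf_supp n _ h
    rw [h0, mul_zero]
    have h12 : 2*(1+i) = n+1 ∨ 2*(1+i) = n+2 := by omega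
    rcases h12 with h2 | h2
    · have hc : ((n:ℂ) - 2*(1+(i:ℂ)) + 1) = 0 := by
        have := congrArg (fun m : ℕ => (m:ℂ)) h2
        push_cast at this
        linear_combination -this
      push_cast
      linear_combination (((n:ℂ) - 2*(1+(i:ℂ)) + 2) * cf n i) * hc
    · have hc : ((n:ℂ) - 2*(1+(i:ℂ)) + 2) = 0 := by
        have := congrArg (fun m : ℕ => (m:ℂ)) h2
        push_cast at this
        linear_combination -this
      push_cast
      linear_combination (((n:ℂ) - 2*(1+(i:ℂ)) + 1) * cf n i) * hc
  · obtain ⟨m, rfl⟩ : ∃ m, n = m + 2*(1+i) := ⟨n - 2*(1+i), by omega⟩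
    rw [cf, cf, if_pos (by omega), if_pos (by omega)]
    have e1 : m + 2*(1+i) - 2*(1+i) = m := by omega
    have e2 : m + 2*(1+i) - 2*i = m + 2 := by omega
    rw [e1, e2]
    have f2 : (Nat.factorial (m+2) : ℂ) = ((m:ℂ)+2) * ((m:ℂ)+1) * (Nat.factorial m : ℂ) := by
      rw [show m+2 = (m+1)+1 from rfl, Nat.factorial_succ, Nat.factorial_succ]
      push_cast; ring
    have f3 : (Nat.factorial (1+i) : ℂ) = ((i:ℂ)+1) * (Nat.factorial i : ℂ) := by
      rw [show 1+i = i+1 by omega, Nat.factorial_succ]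
      push_cast; ring
    rw [f2, f3]
    have hm0 : (Nat.factorial m : ℂ) ≠ 0 := Nat.cast_ne_zero.2 (Nat.factorial_ne_zero m)
    have hi0 : (Nat.factorial i : ℂ) ≠ 0 := Nat.cast_ne_zero.2 (Nat.factorial_ne_zero i)
    have hm1 : ((m:ℂ)+1) ≠ 0 := by
      intro hc; have := congrArg Complex.re hc; simp at this; linarith [Nat.cast_nonneg (α := ℝ) m]
    have hm2 : ((m:ℂ)+2) ≠ 0 := by
      intro hc; have := congrArg Complex.re hc; simp at this; linarith [Nat.cast_nonneg (α := ℝ) m]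
    have hi1 : ((i:ℂ)+1) ≠ 0 := by
      intro hc; have := congrArg Complex.re hc; simp at this; linarith [Nat.cast_nonneg (α := ℝ) i]
    have hp : (-1:ℂ)^(1+i) = -(-1:ℂ)^i := by
      rw [show 1+i = i+1 by omega, pow_succ]; ring
    rw [hp]
    push_cast
    field_simp
    ring
lemma key (k : ℕ) (hk : 5 ≤ k) (j : ℕ) :
    nxt (k:ℂ) (k+1+1) (nxt (k:ℂ) (k+1) (cf (k+1))) j
      = (-(((k:ℂ)+1)*((k:ℂ)+2)^2)*((k:ℂ)+1)) * cf (k+1) j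
        + (if j = 0 then 0 else (-(((k:ℂ)+1)*((k:ℂ)+2)^2)*(k:ℂ)) * cf (k+1) (j-1))
        + (((k:ℂ)+2)*(2*(k:ℂ)+3)) * nxt (k:ℂ) (k+1) (cf (k+1)) j := by
  match j with
  | 0 =>
    simp only [nxt, if_pos rfl, Nat.mul_zero, Nat.sub_zero, Nat.cast_zero, zero_add, zero_mul, add_zero]
    push_cast
    ring
  | 1 =>
    simp only [nxt, if_neg (one_ne_zero), if_pos rfl]
    norm_num
    have ek : ((k+1-2 : ℕ):ℂ) = (k:ℂ)-1 := by
      rw [Nat.cast_sub (by omega)]; push_cast; ring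
    rw [ek]
    have hrec := cf_rec (k+1) 1 le_rfl (by omega)
    push_cast at hrec
    have hc1 : cf (k+1) 1 = -((k:ℂ)*((k:ℂ)+1)) * cf (k+1) 0 := by linear_combination hrec
    rw [hc1]
    ring
  | (i+2) =>
    simp only [nxt, Nat.succ_ne_zero, if_false, ite_false, reduceIte, Nat.add_sub_cancel,
      Nat.succ_sub_one]
    push_cast
    have hI1 : ((i:ℂ)+1) ≠ 0 := Nat.cast_add_one_ne_zero i
    have hI2 : ((i:ℂ)+2) ≠ 0 := by
      have := Nat.cast_add_one_ne_zero (R := ℂ) (i+1); push_cast at this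
      intro hc; exact this (by linear_combination hc)
    rcases (show 2*(i+2) ≤ k+1 ∨ 2*(i+2) = k+2 ∨ 2*(i+2) = k+3 ∨ k+4 ≤ 2*(i+2) by omega)
      with hA | hB | hC | hD
    · -- interior
      have s1 : ((k+1 - 2*(i+2) : ℕ) : ℂ) = (k:ℂ)+1-2*((i:ℂ)+2) := by
        rw [Nat.cast_sub (by omega)]; push_cast; ring
      have s2 : ((k+1+1 - 2*(i+2) : ℕ) : ℂ) = (k:ℂ)+2-2*((i:ℂ)+2) := by
        rw [Nat.cast_sub (by omega)]; push_cast; ring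
      have s3 : ((k+1 - 2*(i+1) : ℕ) : ℂ) = (k:ℂ)+1-2*((i:ℂ)+1) := by
        rw [Nat.cast_sub (by omega)]; push_cast; ring
      have s4 : ((k+1+1 - 2*(i+1) : ℕ) : ℂ) = (k:ℂ)+2-2*((i:ℂ)+1) := by
        rw [Nat.cast_sub (by omega)]; push_cast; ring
      have s5 : ((k+1 - 2*i : ℕ) : ℂ) = (k:ℂ)+1-2*(i:ℂ) := by
        rw [Nat.cast_sub (by omega)]; push_cast; ring
      rw [s1, s2, s3, s4, s5]
      have hrA := cf_rec (k+1) (i+2) (by omega) (by omega)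
      have hrB := cf_rec (k+1) (i+1) (by omega) (by omega)
      push_cast at hrA hrB
      linear_combination ((k:ℂ)^2) * hrA + (4*(k:ℂ)^2) * hrB
    · -- 2(i+2) = k+2
      have hK : (k:ℂ) = 2*(i:ℂ)+2 := by
        have := congrArg (fun m : ℕ => (m:ℂ)) hB; push_cast at this; linear_combination -this
      have z1 : k+1 - 2*(i+2) = 0 := by omega
      have z2 : k+1+1 - 2*(i+2) = 0 := by omega
      have z3 : k+1 - 2*(i+1) = 1 := by omega
      have z4 : k+1+1 - 2*(i+1) = 2 := by omega
      have z5 : k+1 - 2*i = 3 := by omega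
      rw [z1, z2, z3, z4, z5]
      have h0 : cf (k+1) (i+2) = 0 := cf_supp (k+1) _ (by omega)
      rw [h0]
      have hrB := cf_rec (k+1) (i+1) (by omega) (by omega)
      push_cast at hrB
      rw [hK] at hrB ⊢
      push_cast
      linear_combination (16*(i:ℂ)^2 + 32*(i:ℂ) + 16) * hrB
    · -- 2(i+2) = k+3
      have hK : (k:ℂ) = 2*(i:ℂ)+1 := by
        have := congrArg (fun m : ℕ => (m:ℂ)) hC; push_cast at this; linear_combination -this
      have z1 : k+1 - 2*(i+2) = 0 := by omega
      have z2 : k+1+1 - 2*(i+2) = 0 := by omega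
      have z3 : k+1 - 2*(i+1) = 0 := by omega
      have z4 : k+1+1 - 2*(i+1) = 1 := by omega
      have z5 : k+1 - 2*i = 2 := by omega
      rw [z1, z2, z3, z4, z5]
      have h0 : cf (k+1) (i+2) = 0 := cf_supp (k+1) _ (by omega)
      rw [h0]
      have hrB := cf_rec (k+1) (i+1) (by omega) (by omega)
      push_cast at hrB
      rw [hK] at hrB ⊢
      push_cast
      linear_combination (16*(i:ℂ)^2 + 16*(i:ℂ) + 4) * hrB
    · -- tail: everything vanishes
      have h2 : cf (k+1) (i+2) = 0 := cf_supp (k+1) _ (by omega)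
      have h1 : cf (k+1) (i+1) = 0 := cf_supp (k+1) _ (by omega)
      have z4 : k+1+1 - 2*(i+1) = 0 := by omega
      rw [h2, h1, z4]
      push_cast
      ring

lemma nxt_supp (K : ℂ) (w : ℕ) (c : ℕ → ℂ) (h : ∀ j, w < 2*j → c j = 0) :
    ∀ j, w+1 < 2*j → nxt K w c j = 0 := by
  intro j hj
  rw [nxt, h j (by omega)]
  rcases Nat.eq_zero_or_pos j with h0 | h0
  · omega
  · rw [if_neg (by omega)]
    rcases lt_or_ge w (2*(j-1)) with h1 | h1
    · rw [h (j-1) h1]; ring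
    · have hz : w - 2*(j-1) = 0 := by omega
      rw [hz]; push_cast; ring

lemma nxt_top (K : ℂ) (w R : ℕ) (c : ℕ → ℂ) (h : ∀ j, R ≤ j → c j = 0) :
    ∀ j, R+1 ≤ j → nxt K w c j = 0 := by
  intro j hj
  rw [nxt, if_neg (by omega), h j (by omega), h (j-1) (by omega)]
  ring

lemma f0_eq (k : ℕ) : f0 k = SS (k+1) ((k+1)/2 + 1) (cf (k+1)) := by
  rw [f0, SS]
  refine Finset.sum_congr rfl fun j hj => ?_
  rw [cf, if_pos (by simp only [Finset.mem_range] at hj; omega)]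

lemma D2_mul (K : ℂ) (p q : MvPolynomial (Fin 2) ℂ) :
    D2 K (p * q) = p * D2 K q + q * D2 K p := by
  simp only [D2, pderiv_mul]; ring

end Aux

theorem stmt_14 (k : ℕ) (hk : 5 ≤ k) :
    (D2 (k : ℂ))^[2] (f0 k) =
      (-(C (((k : ℂ) + 1) * ((k : ℂ) + 2) ^ 2)) *
          (C ((k : ℂ) + 1) * X 0 ^ 2 + C (k : ℂ) * X 1)) * f0 k
      + (C (((k : ℂ) + 2) * (2 * (k : ℂ) + 3)) * X 0) * D2 (k : ℂ) (f0 k) ∧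
    ∀ r : ℕ, (D2 (k : ℂ))^[r] (f0 k) ∈ Ideal.span {f0 k, D2 (k : ℂ) (f0 k)} := by
  have hs0 : ∀ j, (k+1) < 2*j → cf (k+1) j = 0 := cf_supp (k+1)
  have ht0 : ∀ j, (k+1)/2+1 ≤ j → cf (k+1) j = 0 := cf_top (k+1)
  have h0 : f0 k = SS (k+1) ((k+1)/2+1) (cf (k+1)) := f0_eq k
  have hs1 := nxt_supp (k:ℂ) (k+1) _ hs0
  have ht1 := nxt_top (k:ℂ) (k+1) ((k+1)/2+1) _ ht0
  have hd : D2 (k:ℂ) (f0 k) = SS (k+1+1) ((k+1)/2+1+1) (nxt (k:ℂ) (k+1) (cf (k+1))) := by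
    rw [h0]; exact D2_S (k:ℂ) (k+1) ((k+1)/2+1) _ hs0 ht0
  have he : D2 (k:ℂ) (D2 (k:ℂ) (f0 k))
      = SS (k+1+1+1) ((k+1)/2+1+1+1) (nxt (k:ℂ) (k+1+1) (nxt (k:ℂ) (k+1) (cf (k+1)))) := by
    rw [hd]; exact D2_S (k:ℂ) (k+1+1) ((k+1)/2+1+1) _ hs1 ht1
  have hit : (D2 (k:ℂ))^[2] (f0 k) = D2 (k:ℂ) (D2 (k:ℂ) (f0 k)) := by
    rw [Function.iterate_succ_apply', Function.iterate_one]
  have hpart1 : (D2 (k : ℂ))^[2] (f0 k) =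
      (-(C (((k : ℂ) + 1) * ((k : ℂ) + 2) ^ 2)) *
          (C ((k : ℂ) + 1) * X 0 ^ 2 + C (k : ℂ) * X 1)) * f0 k
      + (C (((k : ℂ) + 2) * (2 * (k : ℂ) + 3)) * X 0) * D2 (k : ℂ) (f0 k) := by
    rw [hit, he]
    have hrhs : (-(C (((k : ℂ) + 1) * ((k : ℂ) + 2) ^ 2)) *
          (C ((k : ℂ) + 1) * X 0 ^ 2 + C (k : ℂ) * X 1)) * f0 k
        + (C (((k : ℂ) + 2) * (2 * (k : ℂ) + 3)) * X 0) * D2 (k : ℂ) (f0 k)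
        = C (-(((k:ℂ)+1)*((k:ℂ)+2)^2)*((k:ℂ)+1)) * X 0 ^ 2 * SS (k+1) ((k+1)/2+1) (cf (k+1))
          + C (-(((k:ℂ)+1)*((k:ℂ)+2)^2)*(k:ℂ)) * X 1 * SS (k+1) ((k+1)/2+1) (cf (k+1))
          + C (((k:ℂ)+2)*(2*(k:ℂ)+3)) * X 0 * SS (k+1+1) ((k+1)/2+1+1) (nxt (k:ℂ) (k+1) (cf (k+1))) := by
      rw [hd, h0]
      simp only [map_mul, map_neg, map_add, map_ofNat, map_one]
      ring
    rw [hrhs, C_mul_X0sq_SS _ _ _ _ hs0, C_mul_X1_SS, C_mul_X0_SS _ _ _ _ hs1]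
    have e1 : SS (k+1+2) ((k+1)/2+1) (fun j => -(((k:ℂ)+1)*((k:ℂ)+2)^2)*((k:ℂ)+1) * cf (k+1) j)
        = SS (k+1+2) ((k+1)/2+1+1+1) (fun j => -(((k:ℂ)+1)*((k:ℂ)+2)^2)*((k:ℂ)+1) * cf (k+1) j) :=
      SS_extend _ _ (by omega) (fun j hj => by rw [ht0 j (by omega)]; ring)
    have e2 : SS (k+1+2) ((k+1)/2+1+1) (fun j => if j = 0 then 0 else -(((k:ℂ)+1)*((k:ℂ)+2)^2)*(k:ℂ) * cf (k+1) (j-1))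
        = SS (k+1+2) ((k+1)/2+1+1+1) (fun j => if j = 0 then 0 else -(((k:ℂ)+1)*((k:ℂ)+2)^2)*(k:ℂ) * cf (k+1) (j-1)) :=
      SS_extend _ _ (by omega) (fun j hj => by
        rw [if_neg (by omega), ht0 (j-1) (by omega)]; ring)
    have e3 : SS (k+1+1+1) ((k+1)/2+1+1) (fun j => ((k:ℂ)+2)*(2*(k:ℂ)+3) * nxt (k:ℂ) (k+1) (cf (k+1)) j)
        = SS (k+1+1+1) ((k+1)/2+1+1+1) (fun j => ((k:ℂ)+2)*(2*(k:ℂ)+3) * nxt (k:ℂ) (k+1) (cf (k+1)) j) :=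
      SS_extend _ _ (by omega) (fun j hj => by rw [ht1 j (by omega)]; ring)
    rw [e1, e2, e3, SS_add, SS_add]
    exact SS_congr _ _ _ _ (fun j => key k hk j)
  refine ⟨hpart1, ?_⟩
  intro r
  induction r with
  | zero =>
    simpa using Ideal.subset_span (Set.mem_insert _ _)
  | succ r ih =>
    rw [Function.iterate_succ_apply']
    obtain ⟨u, v, huv⟩ := Ideal.mem_span_pair.mp ih
    rw [← huv]
    have hf2 : D2 (k:ℂ) (D2 (k:ℂ) (f0 k)) =
        (-(C (((k : ℂ) + 1) * ((k : ℂ) + 2) ^ 2)) *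
          (C ((k : ℂ) + 1) * X 0 ^ 2 + C (k : ℂ) * X 1)) * f0 k
        + (C (((k : ℂ) + 2) * (2 * (k : ℂ) + 3)) * X 0) * D2 (k : ℂ) (f0 k) := by
      rw [← hit]; exact hpart1
    have expand : D2 (k:ℂ) (u * f0 k + v * D2 (k:ℂ) (f0 k))
        = (D2 (k:ℂ) u + v * (-(C (((k : ℂ) + 1) * ((k : ℂ) + 2) ^ 2)) *
            (C ((k : ℂ) + 1) * X 0 ^ 2 + C (k : ℂ) * X 1))) * f0 k
          + (u + D2 (k:ℂ) v + v * (C (((k : ℂ) + 2) * (2 * (k : ℂ) + 3)) * X 0)) * D2 (k : ℂ) (f0 k) := by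
      rw [D2_add, D2_mul, D2_mul, hf2]; ring
    rw [expand]
    exact Ideal.add_mem _
      (Ideal.mul_mem_left _ _ (Ideal.subset_span (Set.mem_insert _ _)))
      (Ideal.mul_mem_left _ _ (Ideal.subset_span (Set.mem_insert_of_mem _ rfl)))
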